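/- Spec_S R is a noetherian topological space with respect to the S-Zariski topology if and only if R satisfies the ascending chain condition on S-radical ideals (ideals I with I = √[S](I)). -/

import Mathlib

/-- An ideal `P` is `S`-prime if `P ∩ S = ∅` and there is `s ∈ S` such that
whenever `a * b ∈ P`, either `s * a ∈ P` or `s * b ∈ P`. -/
def IsSPrime {R : Type*} [CommRing R] (S : Set R) (P : Ideal R) : Prop :=
  (P : Set R) ∩ S = ∅ ∧ ∃ s ∈ S, ∀ a b : R, a * b ∈ P → s * a ∈ P ∨ s * b ∈ P

/-- The `S`-prime spectrum `Spec_S R`: the set of all `S`-prime ideals of `R`. -/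
def SSpec {R : Type*} [CommRing R] (S : Set R) : Type _ :=
  {P : Ideal R // IsSPrime S P}

/-- The `S`-variety of an ideal `I`:
`V_S(I) = {P ∈ Spec_S R | s • I ⊆ P for some s ∈ S}`. -/
def SVar {R : Type*} [CommRing R] (S : Set R) (I : Ideal R) : Set (SSpec S) :=
  {P | ∃ s ∈ S, ∀ x ∈ I, s * x ∈ P.1}

/-- The `S`-radical of an ideal `I`:
`√[S](I) = {a ∈ R | s * a ^ n ∈ I for some s ∈ S, n ∈ ℕ}`. -/
def SRad {R : Type*} [CommRing R] (S : Set R) (I : Ideal R) : Set R :=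
  {a | ∃ s ∈ S, ∃ n : ℕ, s * a ^ n ∈ I}

/-- The `S`-Zariski topology on `Spec_S R`: the closed sets are exactly the `V_S(I)`. -/
def sZariskiTop {R : Type*} [CommRing R] (S : Set R) : TopologicalSpace (SSpec S) :=
  TopologicalSpace.generateFrom {U | ∃ I : Ideal R, U = (SVar S I)ᶜ}

/-- The `S`-flat topology on `Spec_S R`: the coarsest topology in which every
`V_S(f)`, `f ∈ R`, is open. -/
def sFlatTop {R : Type*} [CommRing R] (S : Set R) : TopologicalSpace (SSpec S) :=
  TopologicalSpace.generateFrom {U | ∃ f : R, U = SVar S (Ideal.span {f})}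

/-- An ideal `I` is `S`-radically finite if `√[S](I) = √[S](J)` for some finitely
generated ideal `J`. -/
def SRadFinite {R : Type*} [CommRing R] (S : Set R) (I : Ideal R) : Prop :=
  ∃ J : Ideal R, J.FG ∧ SRad S I = SRad S J

namespace SPrimeAux

variable {R : Type*} [CommRing R] {S : Set R}

theorem notMem_of_mem_S {P : Ideal R} (hP : IsSPrime S P) {s : R} (hs : s ∈ S) : s ∉ P := by
  intro h
  have : s ∈ (P : Set R) ∩ S := ⟨h, hs⟩
  rw [hP.1] at this
  exact this

theorem pow_mem_S (hS1 : (1 : R) ∈ S) (hSmul : ∀ s ∈ S, ∀ t ∈ S, s * t ∈ S)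
    {t : R} (ht : t ∈ S) : ∀ n : ℕ, t ^ n ∈ S := by
  intro n
  induction n with
  | zero => simpa using hS1
  | succ n ih => rw [pow_succ]; exact hSmul _ ih _ ht

/-- The witnessing characterization of membership in `SVar`. -/
theorem mem_SVar_iff (hSmul : ∀ s ∈ S, ∀ t ∈ S, s * t ∈ S)
    (Q : SSpec S) {t : R} (htS : t ∈ S)
    (ht : ∀ a b : R, a * b ∈ Q.1 → t * a ∈ Q.1 ∨ t * b ∈ Q.1) (I : Ideal R) :
    Q ∈ SVar S I ↔ ∀ x ∈ I, t * x ∈ Q.1 := by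
  constructor
  · rintro ⟨s, hsS, hs⟩ x hx
    have hxs : x * s ∈ Q.1 := by rw [mul_comm]; exact hs x hx
    rcases ht x s hxs with h | h
    · exact h
    · exact absurd h (notMem_of_mem_S Q.2 (hSmul _ htS _ hsS))
  · intro h
    exact ⟨t, htS, h⟩

theorem SVar_anti {I J : Ideal R} (h : I ≤ J) : SVar S J ⊆ SVar S I := by
  rintro Q ⟨s, hsS, hs⟩
  exact ⟨s, hsS, fun x hx => hs x (h hx)⟩

theorem SVar_top : SVar S (⊤ : Ideal R) = ∅ := by
  ext Q
  simp only [Set.mem_empty_iff_false, iff_false]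
  rintro ⟨s, hsS, hs⟩
  exact notMem_of_mem_S Q.2 hsS (by simpa using hs 1 trivial)

theorem SVar_bot (hS1 : (1 : R) ∈ S) : SVar S (⊥ : Ideal R) = Set.univ := by
  ext Q
  simp only [Set.mem_univ, iff_true]
  refine ⟨1, hS1, fun x hx => ?_⟩
  rw [Ideal.mem_bot.mp hx]
  simp

theorem SVar_mul (hSmul : ∀ s ∈ S, ∀ t ∈ S, s * t ∈ S) (I J : Ideal R) :
    SVar S (I * J) = SVar S I ∪ SVar S J := by
  apply subset_antisymm
  · intro Q hQ
    obtain ⟨t, htS, ht⟩ := Q.2.2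
    have hQ' := (mem_SVar_iff hSmul Q htS ht (I * J)).mp hQ
    by_cases hJ : Q ∈ SVar S J
    · exact Or.inr hJ
    · left
      have hne : ¬ ∀ x ∈ J, (t * t) * x ∈ Q.1 := fun h => hJ ⟨t * t, hSmul _ htS _ htS, h⟩
      push_neg at hne
      obtain ⟨b, hbJ, hb⟩ := hne
      refine ⟨t * t, hSmul _ htS _ htS, fun a haI => ?_⟩
      have hab : (t * a) * b ∈ Q.1 := by
        have h1 := hQ' (a * b) (Ideal.mul_mem_mul haI hbJ)
        rw [← mul_assoc] at h1
        exact h1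
      rcases ht (t * a) b hab with h | h
      · rw [mul_assoc]; exact h
      · exact absurd (by rw [mul_assoc]; exact Q.1.mul_mem_left t h) hb
  · rintro Q (h | h)
    · exact SVar_anti Ideal.mul_le_left h
    · exact SVar_anti Ideal.mul_le_right h

theorem SVar_iSup (hSmul : ∀ s ∈ S, ∀ t ∈ S, s * t ∈ S) {ι : Sort*} (I : ι → Ideal R) :
    SVar S (⨆ i, I i) = ⋂ i, SVar S (I i) := by
  apply subset_antisymm
  · intro Q hQ
    exact Set.mem_iInter.mpr fun i => SVar_anti (le_iSup I i) hQ
  · intro Q hQ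
    obtain ⟨t, htS, ht⟩ := Q.2.2
    -- the ideal {x | t * x ∈ Q.1}
    set K : Ideal R :=
      { carrier := {x | t * x ∈ Q.1}
        add_mem' := fun {a b} ha hb => by
          simp only [Set.mem_setOf_eq, mul_add] at *
          exact Q.1.add_mem ha hb
        zero_mem' := by simp
        smul_mem' := fun c x hx => by
          simp only [Set.mem_setOf_eq, smul_eq_mul] at *
          rw [show t * (c * x) = c * (t * x) by ring]
          exact Q.1.mul_mem_left c hx } with hK
    have hle : (⨆ i, I i) ≤ K := by
      refine iSup_le fun i => ?_
      intro x hx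
      exact (mem_SVar_iff hSmul Q htS ht (I i)).mp (Set.mem_iInter.mp hQ i) x hx
    exact ⟨t, htS, fun x hx => hle hx⟩

/-- The S-radical as an ideal. -/
def sRadIdeal (hS1 : (1 : R) ∈ S) (hSmul : ∀ s ∈ S, ∀ t ∈ S, s * t ∈ S) (I : Ideal R) :
    Ideal R where
  carrier := SRad S I
  zero_mem' := ⟨1, hS1, 1, by simpa using I.zero_mem⟩
  add_mem' := by
    rintro a b ⟨s, hsS, n, hs⟩ ⟨t, htS, m, ht⟩
    refine ⟨s * t, hSmul _ hsS _ htS, n + m, ?_⟩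
    rw [add_pow]
    rw [Finset.mul_sum]
    refine Ideal.sum_mem _ fun k hk => ?_
    rcases le_or_gt n k with h | h
    · -- a ^ k contains a ^ n
      have hak : a ^ (k - n) * a ^ n = a ^ k := by rw [← pow_add, Nat.sub_add_cancel h]
      have : s * t * (a ^ k * b ^ (n + m - k) * (n + m).choose k) =
          (t * b ^ (n + m - k) * (n + m).choose k) * (a ^ (k - n) * a ^ n) * s := by
        rw [hak]; ring
      rw [this, show (t * b ^ (n + m - k) * ↑((n + m).choose k)) * (a ^ (k - n) * a ^ n) * s
          = (t * b ^ (n + m - k) * ↑((n + m).choose k) * a ^ (k - n)) * (s * a ^ n) by ring]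
      exact Ideal.mul_mem_left _ _ hs
    · -- k < n, so n + m - k ≥ m
      have hm : m ≤ n + m - k := by omega
      have hbk : b ^ (n + m - k - m) * b ^ m = b ^ (n + m - k) := by
        rw [← pow_add, Nat.sub_add_cancel hm]
      have : s * t * (a ^ k * b ^ (n + m - k) * (n + m).choose k) =
          (s * a ^ k * (n + m).choose k) * (b ^ (n + m - k - m) * b ^ m) * t := by
        rw [hbk]; ring
      rw [this, show (s * a ^ k * ↑((n + m).choose k)) * (b ^ (n + m - k - m) * b ^ m) * t
          = (s * a ^ k * ↑((n + m).choose k) * b ^ (n + m - k - m)) * (t * b ^ m) by ring]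
      exact Ideal.mul_mem_left _ _ ht
  smul_mem' := by
    rintro c a ⟨s, hsS, n, hs⟩
    refine ⟨s, hsS, n, ?_⟩
    simp only [smul_eq_mul, mul_pow]
    rw [show s * (c ^ n * a ^ n) = c ^ n * (s * a ^ n) by ring]
    exact Ideal.mul_mem_left _ _ hs

theorem le_sRadIdeal (hS1 : (1 : R) ∈ S) (hSmul : ∀ s ∈ S, ∀ t ∈ S, s * t ∈ S) (I : Ideal R) :
    I ≤ sRadIdeal hS1 hSmul I :=
  fun a ha => ⟨1, hS1, 1, by simpa using ha⟩

theorem SRad_mono {I J : Ideal R} (h : I ≤ J) : SRad S I ⊆ SRad S J := by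
  rintro a ⟨s, hsS, n, hs⟩
  exact ⟨s, hsS, n, h hs⟩

theorem SRad_idem (hS1 : (1 : R) ∈ S) (hSmul : ∀ s ∈ S, ∀ t ∈ S, s * t ∈ S) (I : Ideal R) :
    SRad S (sRadIdeal hS1 hSmul I) = SRad S I := by
  apply subset_antisymm
  · rintro a ⟨s, hsS, n, hs⟩
    obtain ⟨t, htS, m, ht⟩ := hs
    refine ⟨t * s ^ m, hSmul _ htS _ (pow_mem_S hS1 hSmul hsS m), n * m, ?_⟩
    rw [show t * s ^ m * a ^ (n * m) = t * (s * a ^ n) ^ m by rw [mul_pow, pow_mul]; ring]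
    exact ht
  · exact SRad_mono (le_sRadIdeal hS1 hSmul I)

/-- Key induction: if `c * a ^ n ∈ P` for an S-prime with witness `t`,
then `t ^ n * c ∈ P` or `t * a ∈ P`. -/
theorem key_pow (Q : SSpec S) {t : R}
    (ht : ∀ a b : R, a * b ∈ Q.1 → t * a ∈ Q.1 ∨ t * b ∈ Q.1) (a : R) :
    ∀ (n : ℕ) (c : R), c * a ^ n ∈ Q.1 → t ^ n * c ∈ Q.1 ∨ t * a ∈ Q.1 := by
  intro n
  induction n with
  | zero => intro c hc; left; simpa using hc
  | succ n ih =>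
    intro c hc
    rw [pow_succ, ← mul_assoc] at hc
    rcases ht (c * a ^ n) a hc with h | h
    · rw [show t * (c * a ^ n) = (t * c) * a ^ n by ring] at h
      rcases ih (t * c) h with h' | h'
      · left; rw [pow_succ]; rw [show t ^ n * t * c = t ^ n * (t * c) by ring]; exact h'
      · right; exact h'
    · right; exact h

theorem SVar_sRadIdeal (hS1 : (1 : R) ∈ S) (hSmul : ∀ s ∈ S, ∀ t ∈ S, s * t ∈ S) (I : Ideal R) :
    SVar S (sRadIdeal hS1 hSmul I) = SVar S I := by
  apply subset_antisymm
  · exact SVar_anti (le_sRadIdeal hS1 hSmul I)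
  · intro Q hQ
    obtain ⟨t, htS, ht⟩ := Q.2.2
    have hQ' := (mem_SVar_iff hSmul Q htS ht I).mp hQ
    refine ⟨t, htS, ?_⟩
    rintro x ⟨s, hsS, n, hs⟩
    have h1 : (t * s) * x ^ n ∈ Q.1 := by
      rw [show (t * s) * x ^ n = t * (s * x ^ n) by ring]
      exact hQ' _ hs
    rcases key_pow Q ht x n (t * s) h1 with h | h
    · exfalso
      refine notMem_of_mem_S Q.2 (s := t ^ n * (t * s)) ?_ h
      exact hSmul _ (pow_mem_S hS1 hSmul htS n) _ (hSmul _ htS _ hsS)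
    · exact h

/-- If `a ∉ SRad S I`, there is an S-prime `P` with `P ∈ V_S(I)` and `s * a ∉ P` for all `s ∈ S`. -/
theorem SVar_subset_SRad (hS1 : (1 : R) ∈ S) (hSmul : ∀ s ∈ S, ∀ t ∈ S, s * t ∈ S)
    {I J : Ideal R} (h : SVar S I ⊆ SVar S J) : SRad S J ⊆ SRad S I := by
  intro a ha
  by_contra hna
  -- the multiplicative set {s * a ^ n}
  set T : Submonoid R :=
    { carrier := {x | ∃ s ∈ S, ∃ n : ℕ, x = s * a ^ n}
      one_mem' := ⟨1, hS1, 0, by simp⟩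
      mul_mem' := by
        rintro x y ⟨s, hsS, n, rfl⟩ ⟨u, huS, m, rfl⟩
        exact ⟨s * u, hSmul _ hsS _ huS, n + m, by rw [pow_add]; ring⟩ } with hT
  have hdisj : Disjoint (I : Set R) (T : Set R) := by
    rw [Set.disjoint_right]
    rintro x ⟨s, hsS, n, rfl⟩ hxI
    exact hna ⟨s, hsS, n, hxI⟩
  obtain ⟨P, hPprime, hIP, hPT⟩ := Ideal.exists_le_prime_disjoint I T hdisj
  have hPS : (P : Set R) ∩ S = ∅ := by
    rw [Set.eq_empty_iff_forall_notMem]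
    rintro x ⟨hxP, hxS⟩
    exact Set.disjoint_left.mp hPT hxP ⟨x, hxS, 0, by simp⟩
  have hPisS : IsSPrime S P := by
    refine ⟨hPS, 1, hS1, fun x y hxy => ?_⟩
    rcases hPprime.mem_or_mem hxy with h' | h'
    · left; simpa using h'
    · right; simpa using h'
  have hPV : (⟨P, hPisS⟩ : SSpec S) ∈ SVar S I := ⟨1, hS1, fun x hx => by simpa using hIP hx⟩
  obtain ⟨u, huS, hu⟩ := h hPV
  obtain ⟨s, hsS, n, hs⟩ := ha
  have h1 : u * (s * a ^ n) ∈ P := hu _ hs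
  have h2 : u * (s * a ^ n) ∈ T := by
    rw [← mul_assoc]
    exact ⟨u * s, hSmul _ huS _ hsS, n, rfl⟩
  exact Set.disjoint_left.mp hPT h1 h2

/-- Classification of open sets in the S-Zariski topology. -/
theorem isOpen_iff (hS1 : (1 : R) ∈ S) (hSmul : ∀ s ∈ S, ∀ t ∈ S, s * t ∈ S)
    (U : Set (SSpec S)) :
    (sZariskiTop S).IsOpen U ↔ ∃ I : Ideal R, U = (SVar S I)ᶜ := by
  constructor
  · intro h
    induction h with
    | basic U hU => exact hU
    | univ => exact ⟨⊤, by rw [SVar_top]; simp⟩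
    | inter U V _ _ ihU ihV =>
      obtain ⟨I, rfl⟩ := ihU
      obtain ⟨J, rfl⟩ := ihV
      exact ⟨I * J, by rw [SVar_mul hSmul, Set.compl_union]⟩
    | sUnion 𝒮 _ ih =>
      choose f hf using ih
      refine ⟨⨆ U : 𝒮, f U.1 U.2, ?_⟩
      rw [SVar_iSup hSmul, Set.compl_iInter, Set.sUnion_eq_iUnion]
      exact Set.iUnion_congr fun U => hf U.1 U.2
  · rintro ⟨I, rfl⟩
    exact TopologicalSpace.GenerateOpen.basic _ ⟨I, rfl⟩

end SPrimeAux

open SPrimeAux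

/-- `Spec_S R` is noetherian with respect to the `S`-Zariski topology if and only if `R`
satisfies the ascending chain condition on `S`-radical ideals. -/
theorem sZariski_noetherian_iff_acc_sRadical {R : Type*} [CommRing R] [Nontrivial R]
    (S : Set R)
    (hS0 : (0 : R) ∉ S) (hS1 : (1 : R) ∈ S) (hSmul : ∀ s ∈ S, ∀ t ∈ S, s * t ∈ S) :
    @TopologicalSpace.NoetherianSpace (SSpec S) (sZariskiTop S) ↔
      ∀ c : ℕ →o Ideal R, (∀ n : ℕ, (c n : Set R) = SRad S (c n)) →
        ∃ N : ℕ, ∀ n : ℕ, N ≤ n → c n = c N := by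
  classical
  letI := sZariskiTop S
  constructor
  · intro hN c hc
    have hwf : WellFounded ((· > ·) : TopologicalSpace.Opens (SSpec S) →
        TopologicalSpace.Opens (SSpec S) → Prop) := hN.wf
    have hopen : ∀ n : ℕ, IsOpen ((SVar S (c n))ᶜ) := fun n =>
      (isOpen_iff hS1 hSmul _).mpr ⟨c n, rfl⟩
    set U : ℕ →o TopologicalSpace.Opens (SSpec S) :=
      ⟨fun n => ⟨(SVar S (c n))ᶜ, hopen n⟩, fun m n hmn =>
        Set.compl_subset_compl.mpr (SVar_anti (c.mono hmn))⟩ with hU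
    obtain ⟨N, hNch⟩ := wellFoundedGT_iff_monotone_chain_condition.mp ⟨hwf⟩ U
    refine ⟨N, fun n hn => ?_⟩
    have hVeq : SVar S (c N) = SVar S (c n) := by
      have h := hNch n hn
      have h' : ((SVar S (c N))ᶜ : Set (SSpec S)) = (SVar S (c n))ᶜ :=
        congrArg (fun o : TopologicalSpace.Opens (SSpec S) => (o : Set (SSpec S))) h
      exact compl_injective h'
    apply SetLike.coe_injective
    rw [hc n, hc N]
    apply subset_antisymm
    · exact SVar_subset_SRad hS1 hSmul (le_of_eq hVeq)
    · exact SVar_subset_SRad hS1 hSmul (le_of_eq hVeq.symm)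
  · intro hacc
    refine ⟨(wellFoundedGT_iff_monotone_chain_condition.mpr ?_).wf⟩
    intro U
    choose I hI using fun n => (isOpen_iff hS1 hSmul ((U n : Set (SSpec S)))).mp (U n).2
    have hanti : ∀ m n : ℕ, m ≤ n → SVar S (I n) ⊆ SVar S (I m) := by
      intro m n hmn
      have h : ((SVar S (I m))ᶜ : Set (SSpec S)) ⊆ (SVar S (I n))ᶜ := by
        rw [← hI m, ← hI n]
        exact U.mono hmn
      exact Set.compl_subset_compl.mp h
    set c : ℕ →o Ideal R :=
      ⟨fun n => sRadIdeal hS1 hSmul (I n), fun m n hmn =>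
        SVar_subset_SRad hS1 hSmul (hanti m n hmn)⟩ with hcdef
    have hrad : ∀ n : ℕ, (c n : Set R) = SRad S (c n) := by
      intro n
      show (SRad S (I n) : Set R) = SRad S (sRadIdeal hS1 hSmul (I n))
      rw [SRad_idem hS1 hSmul]
    obtain ⟨N, hNch⟩ := hacc c hrad
    refine ⟨N, fun n hn => ?_⟩
    have hVeq : SVar S (I N) = SVar S (I n) := by
      have hcc : sRadIdeal hS1 hSmul (I n) = sRadIdeal hS1 hSmul (I N) := hNch n hn
      calc SVar S (I N) = SVar S (sRadIdeal hS1 hSmul (I N)) :=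
            (SVar_sRadIdeal hS1 hSmul (I N)).symm
        _ = SVar S (sRadIdeal hS1 hSmul (I n)) := by rw [hcc]
        _ = SVar S (I n) := SVar_sRadIdeal hS1 hSmul (I n)
    apply TopologicalSpace.Opens.ext
    rw [hI N, hI n, hVeq]
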